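/- arXiv:2007.08570 — 2 statements merged into one kernel-verified Lean document; each statement's English description precedes it below -/
import Mathlib

section
/- For a unital CPTP map Λ on ℂ^{d_A} and G = 1 − (1/d_A²)Tr[S(Λ⊗Λ)(S)], one has G ≤ 1 − 1/d_A², with equality if and only if Λ is the completely depolarizing map T(X) = Tr(X) I/d_A. -/
open Matrix Kronecker BigOperators MeasureTheory ComplexOrder

noncomputable section

/-- The swap operator on `ℂ^{d_A} ⊗ ℂ^{d_A}`. -/
def swapOp (d : ℕ) : Matrix (Fin d × Fin d) (Fin d × Fin d) ℂ :=
  Matrix.of fun p q => if p.1 = q.2 ∧ p.2 = q.1 then 1 else 0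

/-- The tensor product `Φ ⊗ Ψ` of two linear maps on `d × d` matrices, acting on
operators over `ℂ^d ⊗ ℂ^d`. -/
def tensorOp (d : ℕ)
    (Φ Ψ : Matrix (Fin d) (Fin d) ℂ → Matrix (Fin d) (Fin d) ℂ)
    (M : Matrix (Fin d × Fin d) (Fin d × Fin d) ℂ) :
    Matrix (Fin d × Fin d) (Fin d × Fin d) ℂ :=
  Matrix.of fun p q => ∑ e : Fin d, ∑ f : Fin d, ∑ e' : Fin d, ∑ f' : Fin d,
    Φ (Matrix.single e f 1) p.1 q.1 * Ψ (Matrix.single e' f' 1) p.2 q.2 *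
      M (e, e') (f, f')

/-- `G = 1 − (1/d²) Tr[S (Λ ⊗ Λ)(S)]` for a map `Λ` on `d × d` matrices. -/
def GOfMap (d : ℕ) (Λ : Matrix (Fin d) (Fin d) ℂ → Matrix (Fin d) (Fin d) ℂ) : ℝ :=
  1 - (1 / (d : ℝ)^2) * (Matrix.trace (swapOp d * tensorOp d Λ Λ (swapOp d))).re

/-- The rank-one projector `|u⟩⟨u|` as a matrix. -/
def pureState (d : ℕ) (u : Fin d → ℂ) : Matrix (Fin d) (Fin d) ℂ :=
  Matrix.of fun a c => u a * star (u c)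

/-- The Choi matrix of `Λ`. -/
def choi (d : ℕ) (Λ : Matrix (Fin d) (Fin d) ℂ →ₗ[ℂ] Matrix (Fin d) (Fin d) ℂ) :
    Matrix (Fin d × Fin d) (Fin d × Fin d) ℂ :=
  Matrix.of fun p q => Λ (Matrix.single p.1 q.1 1) p.2 q.2

lemma trace_key (d : ℕ) (Λ : Matrix (Fin d) (Fin d) ℂ →ₗ[ℂ] Matrix (Fin d) (Fin d) ℂ) :
    (swapOp d * tensorOp d (fun X => Λ X) (fun X => Λ X) (swapOp d)).trace
    = (choi d Λ * choi d Λ).trace := by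
  simp only [Matrix.trace, Matrix.diag, Matrix.mul_apply, swapOp, tensorOp, choi,
    Matrix.of_apply, Fintype.sum_prod_type, ite_and, boole_mul, mul_ite, mul_one, mul_zero,
    ite_mul, zero_mul, one_mul,
    Finset.sum_ite_eq, Finset.sum_ite_eq', Finset.mem_univ, if_true]
  rw [Finset.sum_comm]
  conv_lhs => enter [2, b]; rw [Finset.sum_comm]
  conv_lhs => enter [2, b, 2, e]; rw [Finset.sum_comm]
  rw [Finset.sum_comm]

lemma choi_trace (d : ℕ) (Λ : Matrix (Fin d) (Fin d) ℂ →ₗ[ℂ] Matrix (Fin d) (Fin d) ℂ)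
    (hTP : ∀ X, Matrix.trace (Λ X) = Matrix.trace X) :
    (choi d Λ).trace = (d : ℂ) := by
  have key : ∀ e : Fin d, ∑ a, Λ (Matrix.single e e 1) a a = 1 := by
    intro e
    have h := hTP (Matrix.single e e 1)
    rw [Matrix.trace_single_eq_same] at h
    simpa [Matrix.trace, Matrix.diag] using h
  simp only [Matrix.trace, Matrix.diag, choi, Matrix.of_apply, Fintype.sum_prod_type, key]
  simp

lemma stdBasis_trace (d : ℕ) (i j : Fin d) :
    (Matrix.single i j (1:ℂ)).trace = if i = j then 1 else 0 := by
  simp only [Matrix.trace, Matrix.diag, Matrix.single, Matrix.of_apply, ite_and,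
    Finset.sum_ite_eq, Finset.mem_univ, if_true]
  by_cases h : i = j
  · simp [h]
  · simp [h, Ne.symm h]

lemma depol_iff (d : ℕ) (hd : 0 < d)
    (Λ : Matrix (Fin d) (Fin d) ℂ →ₗ[ℂ] Matrix (Fin d) (Fin d) ℂ) :
    choi d Λ = ((d:ℂ))⁻¹ • 1 ↔
      ∀ X, Λ X = (Matrix.trace X / d) • (1 : Matrix (Fin d) (Fin d) ℂ) := by
  constructor
  · intro h X
    have hX : X = ∑ i : Fin d, ∑ j : Fin d, Matrix.single i j (X i j) :=
      Matrix.matrix_eq_sum_single X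
    have hΛ : Λ X = ∑ i : Fin d, ∑ j : Fin d, X i j • Λ (Matrix.single i j 1) := by
      conv_lhs => rw [hX]
      rw [map_sum]
      congr 1; funext i
      rw [map_sum]
      congr 1; funext j
      rw [← _root_.map_smul]
      congr 1
      rw [Matrix.smul_single, smul_eq_mul, mul_one]
    ext a b
    rw [hΛ]
    have hentry : ∀ i j : Fin d, Λ (Matrix.single i j 1) a b
        = ((d:ℂ))⁻¹ * (if i = j ∧ a = b then 1 else 0) := by
      intro i j
      have : Λ (Matrix.single i j 1) a b = choi d Λ (i, a) (j, b) := rfl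
      rw [this, h]
      simp [Matrix.one_apply, Prod.ext_iff, ite_and, mul_ite]
    simp only [Matrix.sum_apply, Matrix.smul_apply, smul_eq_mul, hentry]
    simp only [mul_ite, mul_one, mul_zero, ite_and]
    rcases eq_or_ne a b with hab | hab
    · subst hab
      simp [Matrix.trace, Matrix.diag, Finset.sum_ite_eq', Matrix.one_apply, Matrix.smul_apply,
        Finset.mul_sum, div_eq_mul_inv, mul_comm]
    · simp [hab, Matrix.one_apply, Matrix.smul_apply]
  · intro h
    ext ⟨i, a⟩ ⟨j, b⟩
    have : choi d Λ (i, a) (j, b) = Λ (Matrix.single i j 1) a b := rfl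
    rw [this, h]
    simp only [stdBasis_trace, Matrix.smul_apply, Matrix.one_apply, Prod.ext_iff, ite_and,
      div_eq_mul_inv, mul_ite, ite_mul, one_mul, zero_mul, mul_one, mul_zero, smul_eq_mul,
      Matrix.of_apply]
    by_cases h1 : i = j <;> by_cases h2 : a = b <;> simp [h1, h2]

/-- For a unital CPTP map `Λ` on `ℂ^{d_A}`, `G ≤ 1 − 1/d_A²`, with equality
iff `Λ` is the completely depolarizing map `T(X) = Tr(X) I/d_A`. -/
theorem otoc_max_depolarizing (dA : ℕ) (hdA : 0 < dA)
    (Λ : Matrix (Fin dA) (Fin dA) ℂ →ₗ[ℂ] Matrix (Fin dA) (Fin dA) ℂ)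
    (hCP : (Matrix.of fun p q : Fin dA × Fin dA =>
      Λ (Matrix.single p.1 q.1 1) p.2 q.2).PosSemidef)
    (hTP : ∀ X, Matrix.trace (Λ X) = Matrix.trace X)
    (hunital : Λ 1 = 1) :
    GOfMap dA (fun X => Λ X) ≤ 1 - 1 / (dA : ℝ)^2 ∧
    (GOfMap dA (fun X => Λ X) = 1 - 1 / (dA : ℝ)^2 ↔
      ∀ X, Λ X = (Matrix.trace X / dA) • (1 : Matrix (Fin dA) (Fin dA) ℂ)) := by
  have hdC : (dA : ℂ) ≠ 0 := Nat.cast_ne_zero.mpr hdA.ne'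
  have hdR : (0:ℝ) < (dA : ℝ)^2 := by positivity
  set C : Matrix (Fin dA × Fin dA) (Fin dA × Fin dA) ℂ := choi dA Λ with hCdef
  have hH : C.IsHermitian := hCP.1
  have htr : C.trace = (dA : ℂ) := choi_trace dA Λ hTP
  set M : Matrix (Fin dA × Fin dA) (Fin dA × Fin dA) ℂ := C - ((dA:ℂ))⁻¹ • 1 with hMdef
  have hMH : Mᴴ = M := by
    rw [hMdef, Matrix.conjTranspose_sub, hH.eq, Matrix.conjTranspose_smul,
      Matrix.conjTranspose_one]
    congr 1
    simp
  set t : ℝ := ∑ p : Fin dA × Fin dA, ∑ q : Fin dA × Fin dA, Complex.normSq (M p q) with htdef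
  have ht0 : 0 ≤ t := by
    apply Finset.sum_nonneg; intro p _
    exact Finset.sum_nonneg fun q _ => Complex.normSq_nonneg _
  have hstar : ∀ p q, M q p = star (M p q) := by
    intro p q
    conv_lhs => rw [← hMH]
    rw [Matrix.conjTranspose_apply]
  have hMM : (M * M).trace = (t : ℂ) := by
    simp only [Matrix.trace, Matrix.diag, Matrix.mul_apply]
    rw [htdef]
    push_cast
    congr 1; funext p
    congr 1; funext q
    rw [hstar p q, Complex.star_def, Complex.mul_conj]
  have hexp : (M * M).trace = (C * C).trace - 1 := by
    rw [hMdef]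
    simp only [Matrix.sub_mul, Matrix.mul_sub, Matrix.smul_mul, Matrix.mul_smul,
      Matrix.mul_one, Matrix.one_mul, Matrix.trace_sub, Matrix.trace_smul, Matrix.trace_one,
      htr, smul_eq_mul, smul_smul]
    have hcard : (Fintype.card (Fin dA × Fin dA) : ℂ) = (dA : ℂ) * dA := by
      push_cast [Fintype.card_prod, Fintype.card_fin]
      ring
    rw [hcard]
    field_simp
    ring
  have hCC : (C * C).trace = ((1 + t : ℝ) : ℂ) := by
    have := hexp.symm.trans hMM
    push_cast
    linear_combination this
  have hG : GOfMap dA (fun X => Λ X) = 1 - 1 / (dA : ℝ)^2 - t / (dA : ℝ)^2 := by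
    rw [GOfMap, trace_key, ← hCdef, hCC]
    rw [Complex.ofReal_re]
    field_simp
    ring
  constructor
  · rw [hG]
    have : 0 ≤ t / (dA : ℝ)^2 := div_nonneg ht0 hdR.le
    linarith
  · rw [hG, ← depol_iff dA hdA Λ, ← hCdef]
    constructor
    · intro hEq
      have ht : t = 0 := by
        have : t / (dA : ℝ)^2 = 0 := by linarith
        field_simp at this
        simpa using this
      have hM0 : M = 0 := by
        ext p q
        have hp : ∀ p ∈ (Finset.univ : Finset (Fin dA × Fin dA)),
            0 ≤ ∑ q, Complex.normSq (M p q) :=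
          fun p _ => Finset.sum_nonneg fun q _ => Complex.normSq_nonneg _
        have h1 := (Finset.sum_eq_zero_iff_of_nonneg hp).mp ht p (Finset.mem_univ p)
        have h2 := (Finset.sum_eq_zero_iff_of_nonneg
          (fun q _ => Complex.normSq_nonneg (M p q))).mp h1 q (Finset.mem_univ q)
        simpa [Complex.normSq_eq_zero] using h2
      rw [hMdef] at hM0
      rw [sub_eq_zero] at hM0
      exact hM0
    · intro hC1
      have : M = 0 := by rw [hMdef, hC1, sub_self]
      have ht : t = 0 := by
        rw [htdef, this]
        simp
      rw [ht]
      simp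
end
end

section
/- Let ρ_Λ = (Λ ⊗ id)(|φ⁺⟩⟨φ⁺|) be the Choi state of a unital CPTP map Λ on ℂ^{d_A} and ρ_T = I/d_A² the Choi state of the depolarizing map. Then G = (1 − 1/d_A²) − ‖ρ_Λ − ρ_T‖₂², where G = 1 − (1/d_A²)Tr[S(Λ⊗Λ)(S)] and ‖·‖₂ is the Hilbert–Schmidt norm. -/
open Matrix Kronecker BigOperators MeasureTheory ComplexOrder

noncomputable section

/-- The density matrix `|φ⁺⟩⟨φ⁺|` of the maximally entangled state on `ℂ^d ⊗ ℂ^d`. -/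
def phiPlusProj (d : ℕ) : Matrix (Fin d × Fin d) (Fin d × Fin d) ℂ :=
  Matrix.of fun p q => if p.1 = p.2 ∧ q.1 = q.2 then ((d : ℂ))⁻¹ else 0

/-- auxiliary -/
-- auxiliary lemmas
lemma tensorOp_swap_apply {d : ℕ} (Φ : Matrix (Fin d) (Fin d) ℂ → Matrix (Fin d) (Fin d) ℂ)
    (p q : Fin d × Fin d) :
    tensorOp d Φ Φ (swapOp d) p q =
      ∑ e : Fin d, ∑ f : Fin d,
        Φ (Matrix.single e f 1) p.1 q.1 * Φ (Matrix.single f e 1) p.2 q.2 := by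
  simp only [tensorOp, swapOp, Matrix.of_apply]
  refine Finset.sum_congr rfl fun e _ => Finset.sum_congr rfl fun f _ => ?_
  simp [mul_ite, ite_and, Finset.sum_ite_eq, Finset.sum_ite_eq']

lemma swapOp_mul_apply {d : ℕ} (T : Matrix (Fin d × Fin d) (Fin d × Fin d) ℂ)
    (p q : Fin d × Fin d) :
    (swapOp d * T) p q = T (p.2, p.1) q := by
  rw [Matrix.mul_apply, Fintype.sum_prod_type]
  simp [swapOp, ite_and, Finset.sum_ite_eq, Finset.sum_ite_eq']

lemma trace_swap_tensor {d : ℕ} (Φ : Matrix (Fin d) (Fin d) ℂ → Matrix (Fin d) (Fin d) ℂ) :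
    Matrix.trace (swapOp d * tensorOp d Φ Φ (swapOp d)) =
      ∑ a : Fin d, ∑ b : Fin d, ∑ e : Fin d, ∑ f : Fin d,
        Φ (Matrix.single e f 1) b a * Φ (Matrix.single f e 1) a b := by
  simp only [Matrix.trace, Matrix.diag, swapOp_mul_apply]
  rw [Fintype.sum_prod_type]
  refine Finset.sum_congr rfl fun a _ => Finset.sum_congr rfl fun b _ => ?_
  rw [tensorOp_swap_apply]

lemma tensorOp_id_phi {d : ℕ} (Φ : Matrix (Fin d) (Fin d) ℂ → Matrix (Fin d) (Fin d) ℂ)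
    (p q : Fin d × Fin d) :
    tensorOp d Φ id (phiPlusProj d) p q
      = (d : ℂ)⁻¹ * Φ (Matrix.single p.2 q.2 1) p.1 q.1 := by
  simp only [tensorOp, phiPlusProj, Matrix.of_apply, id_eq, Matrix.single]
  simp [mul_ite, ite_and, Finset.sum_ite_eq, Finset.sum_ite_eq', mul_comm]


/-- `G = (1 − 1/d_A²) − ‖ρ_Λ − ρ_T‖₂²`, where `ρ_Λ = (Λ ⊗ id)(|φ⁺⟩⟨φ⁺|)` is the Choi
state of the unital CPTP map `Λ` and `ρ_T = I/d_A²` that of the depolarizing map. -/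
theorem otoc_choi_distance (dA : ℕ) (hdA : 0 < dA)
    (Λ : Matrix (Fin dA) (Fin dA) ℂ →ₗ[ℂ] Matrix (Fin dA) (Fin dA) ℂ)
    (hCP : (Matrix.of fun p q : Fin dA × Fin dA =>
      Λ (Matrix.single p.1 q.1 1) p.2 q.2).PosSemidef)
    (hTP : ∀ X, Matrix.trace (Λ X) = Matrix.trace X)
    (hunital : Λ 1 = 1) :
    GOfMap dA (fun X => Λ X) = (1 - 1 / (dA : ℝ)^2) -
      (Matrix.trace
        ((tensorOp dA (fun X => Λ X) id (phiPlusProj dA) -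
            (((dA : ℂ)^2)⁻¹ • 1))ᴴ *
         (tensorOp dA (fun X => Λ X) id (phiPlusProj dA) -
            (((dA : ℂ)^2)⁻¹ • 1)))).re := by

  have hd : ((dA : ℝ)) ≠ 0 := Nat.cast_ne_zero.mpr hdA.ne'
  have hdc : ((dA : ℂ)) ≠ 0 := Nat.cast_ne_zero.mpr hdA.ne'
  -- hermiticity of the Choi matrix, entrywise
  have herm : ∀ e f a b : Fin dA,
      Λ (Matrix.single f e 1) a b
        = (starRingEnd ℂ) (Λ (Matrix.single e f 1) b a) := by
    intro e f a b
    have h := congrFun (congrFun hCP.1 (f, a)) (e, b)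
    simpa [Matrix.conjTranspose_apply] using h.symm
  -- trace preservation, entrywise
  have htr : ∀ e f : Fin dA,
      (∑ a : Fin dA, Λ (Matrix.single e f 1) a a) = if e = f then 1 else 0 := by
    intro e f
    have h := hTP (Matrix.single e f 1)
    simpa [Matrix.trace, Matrix.diag, Matrix.single, ite_and,
      Finset.sum_ite_eq, eq_comm] using h
  set ρ := tensorOp dA (fun X => Λ X) id (phiPlusProj dA) with hρ
  have hρapp : ∀ p q : Fin dA × Fin dA,
      ρ p q = (dA : ℂ)⁻¹ * Λ (Matrix.single p.2 q.2 1) p.1 q.1 :=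
    tensorOp_id_phi _
  -- trace of ρ is 1
  have htrρ : ∑ q : Fin dA × Fin dA, ρ q q = 1 := by
    rw [Fintype.sum_prod_type]
    simp only [hρapp]
    rw [Finset.sum_comm]
    calc (∑ b : Fin dA, ∑ a : Fin dA,
            (dA : ℂ)⁻¹ * Λ (Matrix.single b b 1) a a)
        = ∑ b : Fin dA, (dA : ℂ)⁻¹ * ∑ a : Fin dA, Λ (Matrix.single b b 1) a a := by
          simp [Finset.mul_sum]
      _ = 1 := by
          simp only [htr, if_pos rfl, if_true, mul_one, Finset.sum_const, Finset.card_univ,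
            Fintype.card_fin, nsmul_eq_mul]
          field_simp
  -- the common quantity
  set Sfull : ℝ := ∑ a : Fin dA, ∑ b : Fin dA, ∑ e : Fin dA, ∑ f : Fin dA,
    Complex.normSq (Λ (Matrix.single e f 1) b a) with hS
  -- LHS trace
  have hL : (Matrix.trace (swapOp dA *
      tensorOp dA (fun X => Λ X) (fun X => Λ X) (swapOp dA))).re = Sfull := by
    have : Matrix.trace (swapOp dA *
        tensorOp dA (fun X => Λ X) (fun X => Λ X) (swapOp dA)) = ((Sfull : ℝ) : ℂ) := by
      rw [trace_swap_tensor]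
      have step : ∀ a b e f : Fin dA,
          Λ (Matrix.single e f 1) b a * Λ (Matrix.single f e 1) a b
            = ((Complex.normSq (Λ (Matrix.single e f 1) b a) : ℝ) : ℂ) := by
        intro a b e f
        rw [herm e f a b, Complex.mul_conj]
      simp only [step, hS]
      push_cast
      rfl
    rw [this, Complex.ofReal_re]
  -- RHS trace
  set c : ℂ := ((dA : ℂ)^2)⁻¹ with hcdef
  have hc : c = ((((dA : ℝ)^2)⁻¹ : ℝ) : ℂ) := by rw [hcdef]; push_cast; rfl
  have hR : (Matrix.trace ((ρ - c • 1)ᴴ * (ρ - c • 1))).re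
      = ((dA : ℝ)^2)⁻¹ * Sfull - ((dA : ℝ)^2)⁻¹ := by
    have hXapp : ∀ p q : Fin dA × Fin dA,
        (ρ - c • 1) p q = ρ p q - (if p = q then c else 0) := by
      intro p q
      simp [Matrix.sub_apply, Matrix.smul_apply, Matrix.one_apply, mul_ite]
    have hstar : ∀ z : ℂ, star z * z = ((Complex.normSq z : ℝ) : ℂ) := by
      intro z
      rw [show (star z : ℂ) = (starRingEnd ℂ) z from rfl, mul_comm, Complex.mul_conj]
    have htrX : Matrix.trace ((ρ - c • 1)ᴴ * (ρ - c • 1))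
        = ((∑ q : Fin dA × Fin dA, ∑ p : Fin dA × Fin dA,
            Complex.normSq ((ρ - c • 1) p q) : ℝ) : ℂ) := by
      simp only [Matrix.trace, Matrix.diag, Matrix.mul_apply, Matrix.conjTranspose_apply,
        hstar]
      push_cast
      rfl
    rw [htrX, Complex.ofReal_re]
    -- now a real computation
    have expand : ∀ p q : Fin dA × Fin dA,
        Complex.normSq ((ρ - c • 1) p q)
          = Complex.normSq (ρ p q) + (if p = q then Complex.normSq c else 0)
            - 2 * (if p = q then (ρ q q * (starRingEnd ℂ) c).re else 0) := by
      intro p q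
      rw [hXapp, Complex.normSq_sub]
      by_cases h : p = q
      · subst h; simp
      · simp [h]
    simp only [expand]
    have inner : ∀ q : Fin dA × Fin dA,
        (∑ p : Fin dA × Fin dA,
          ((Complex.normSq (ρ p q) + if p = q then Complex.normSq c else 0)
            - 2 * if p = q then (ρ q q * (starRingEnd ℂ) c).re else 0))
        = (∑ p : Fin dA × Fin dA, Complex.normSq (ρ p q)) + Complex.normSq c
            - 2 * (ρ q q * (starRingEnd ℂ) c).re := by
      intro q
      rw [Finset.sum_sub_distrib, Finset.sum_add_distrib, ← Finset.mul_sum]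
      simp [Finset.sum_ite_eq']
    rw [Finset.sum_congr rfl fun q _ => inner q]
    rw [Finset.sum_sub_distrib, Finset.sum_add_distrib, ← Finset.mul_sum]
    have TA : (∑ _q : Fin dA × Fin dA, Complex.normSq c) = ((dA : ℝ)^2)⁻¹ := by
      simp only [Finset.sum_const, Finset.card_univ, Fintype.card_prod, Fintype.card_fin,
        nsmul_eq_mul, hc, Complex.normSq_ofReal]
      push_cast
      field_simp
    have TB : (∑ q : Fin dA × Fin dA, (ρ q q * (starRingEnd ℂ) c).re) = ((dA : ℝ)^2)⁻¹ := by
      rw [← Complex.re_sum, ← Finset.sum_mul, htrρ, one_mul, hc, Complex.conj_ofReal,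
        Complex.ofReal_re]
    have T1 : (∑ q : Fin dA × Fin dA, ∑ p : Fin dA × Fin dA, Complex.normSq (ρ p q))
        = ((dA : ℝ)^2)⁻¹ * Sfull := by
      simp only [hρapp, Complex.normSq_mul, Complex.normSq_inv, Complex.normSq_natCast]
      simp only [← Finset.mul_sum]
      have hcoef : ((dA : ℝ) * (dA : ℝ))⁻¹ = ((dA : ℝ)^2)⁻¹ := by rw [sq]
      have hsum : (∑ q : Fin dA × Fin dA, ∑ p : Fin dA × Fin dA,
          Complex.normSq (Λ (Matrix.single p.2 q.2 1) p.1 q.1)) = Sfull := by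
        rw [hS]
        simp only [Fintype.sum_prod_type]
        refine Finset.sum_congr rfl fun a _ => ?_
        rw [Finset.sum_comm]
        exact Finset.sum_congr rfl fun b _ => Finset.sum_comm
      rw [hcoef, hsum]
    rw [T1, TA, TB]
    ring
  -- conclusion
  rw [GOfMap, hL, hR]
  ring
end
end
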